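/- arXiv:1607.06801 — 4 statements merged into one kernel-verified Lean document; each statement's English description precedes it below -/
import Mathlib

section
/- Suppose the outcomes follow the linear model Y_i = c^(W_i) + X_i·β^(W_i) + ε_i, the regression scheme is centered, and n₀, n₁ ≥ 1. Then τ̂ − τ̄ = ε̄^(1) − ε̄^(0) − (X̄₁ − X̄₀)·(β̂̄ − β̄), where ε̄^(w) = (1/n_w)Σ_{i : W_i = w} ε_i, β̄ = (n₁β^(0) + n₀β^(1))/n, and β̂̄ = (n₁β̂^(0) + n₀β̂^(1))/n. -/
open Finset

/-- Under the linear model Y_i = c⁽ᵂⁱ⁾ + X_i·β⁽ᵂⁱ⁾ + ε_i, if the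
regression scheme is centered and both groups are nonempty, then
τ̂ − τ̄ = ε̄⁽¹⁾ − ε̄⁽⁰⁾ − (X̄₁ − X̄₀)·(β̂̄ − β̄), where β̄ = (n₁β⁽⁰⁾ + n₀β⁽¹⁾)/n and
β̂̄ = (n₁β̂⁽⁰⁾ + n₀β̂⁽¹⁾)/n. -/
theorem stmt_1 (n p : ℕ) (X : Fin n → Fin p → ℝ) (W : Fin n → Fin 2)
    (c : Fin 2 → ℝ) (beta : Fin 2 → Fin p → ℝ) (eps : Fin n → ℝ) (Y : Fin n → ℝ)
    (hY : ∀ i, Y i = c (W i) + (∑ j, X i j * beta (W i) j) + eps i)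
    (chat : Fin 2 → ℝ) (bhat : Fin 2 → Fin p → ℝ)
    (nw : Fin 2 → ℕ) (hnw : ∀ w, nw w = (univ.filter fun i => W i = w).card)
    (hpos : ∀ w, 1 ≤ nw w)
    (Xbar : Fin p → ℝ) (hXbar : ∀ j, Xbar j = (∑ i, X i j) / n)
    (Xbarw : Fin 2 → Fin p → ℝ)
    (hXbarw : ∀ w j, Xbarw w j = (∑ i ∈ univ.filter fun i => W i = w, X i j) / nw w)
    (Ybarw : Fin 2 → ℝ)
    (hYbarw : ∀ w, Ybarw w = (∑ i ∈ univ.filter fun i => W i = w, Y i) / nw w)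
    (hcentered : ∀ w, Ybarw w = (∑ j, Xbarw w j * bhat w j) + chat w)
    (epsbar : Fin 2 → ℝ)
    (hepsbar : ∀ w, epsbar w = (∑ i ∈ univ.filter fun i => W i = w, eps i) / nw w)
    (betabar bhatbar : Fin p → ℝ)
    (hbetabar : ∀ j, betabar j = ((nw 1 : ℝ) * beta 0 j + (nw 0 : ℝ) * beta 1 j) / n)
    (hbhatbar : ∀ j, bhatbar j = ((nw 1 : ℝ) * bhat 0 j + (nw 0 : ℝ) * bhat 1 j) / n)
    (tauhat taubar : ℝ)
    (htauhat : tauhat = (∑ j, Xbar j * (bhat 1 j - bhat 0 j)) + chat 1 - chat 0)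
    (htaubar : taubar = (∑ j, Xbar j * (beta 1 j - beta 0 j)) + c 1 - c 0) :
    tauhat - taubar
      = epsbar 1 - epsbar 0
        - ∑ j, (Xbarw 1 j - Xbarw 0 j) * (bhatbar j - betabar j) := by
  have hm : ∀ w, (nw w : ℝ) ≠ 0 := by
    intro w
    have := hpos w
    positivity
  have hncard : nw 0 + nw 1 = n := by
    rw [hnw, hnw]
    have h1 : (univ.filter fun i => W i = (1:Fin 2)) =
        (univ.filter fun i => ¬ W i = (0:Fin 2)) := by
      apply Finset.filter_congr
      intro i _
      constructor
      · intro h; rw [h]; decide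
      · intro h; omega
    rw [h1, Finset.card_filter_add_card_filter_not, Finset.card_univ,
      Fintype.card_fin]
  have hnR : (n : ℝ) = (nw 0 : ℝ) + (nw 1 : ℝ) := by
    rw [← hncard]; push_cast; ring
  have hnne : (n : ℝ) ≠ 0 := by
    rw [hnR]
    have h0 := hpos 0; have h1 := hpos 1
    positivity
  have hXsum : ∀ j, (∑ i, X i j)
      = (∑ i ∈ univ.filter fun i => W i = (0:Fin 2), X i j)
        + ∑ i ∈ univ.filter fun i => W i = (1:Fin 2), X i j := by
    intro j
    have h1 : (univ.filter fun i => W i = (1:Fin 2)) =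
        (univ.filter fun i => ¬ W i = (0:Fin 2)) := by
      apply Finset.filter_congr
      intro i _
      constructor
      · intro h; rw [h]; decide
      · intro h; omega
    rw [h1, Finset.sum_filter_add_sum_filter_not]
  have hYsum : ∀ w, (∑ i ∈ univ.filter fun i => W i = w, Y i)
      = (nw w : ℝ) * c w
        + (∑ j, (∑ i ∈ univ.filter fun i => W i = w, X i j) * beta w j)
        + ∑ i ∈ univ.filter fun i => W i = w, eps i := by
    intro w
    have : (∑ i ∈ univ.filter fun i => W i = w, Y i)
        = ∑ i ∈ univ.filter fun i => W i = w,
            (c w + (∑ j, X i j * beta w j) + eps i) := by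
      apply Finset.sum_congr rfl
      intro i hi
      have hw : W i = w := (Finset.mem_filter.mp hi).2
      rw [hY i, hw]
    rw [this]
    rw [Finset.sum_add_distrib, Finset.sum_add_distrib, Finset.sum_const,
      Finset.sum_comm, ← hnw]
    simp only [nsmul_eq_mul, Finset.sum_mul]
  have hchat : ∀ w, chat w = c w + (∑ j, Xbarw w j * beta w j) + epsbar w
      - ∑ j, Xbarw w j * bhat w j := by
    intro w
    have h := hcentered w
    rw [hYbarw] at h
    simp only [hXbarw, hepsbar, div_mul_eq_mul_div, ← Finset.sum_div]
    simp only [hXbarw, div_mul_eq_mul_div, ← Finset.sum_div] at h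
    rw [hYsum w] at h
    have hmw := hm w
    field_simp at h
    field_simp
    linarith
  have hXbar' : ∀ j, Xbar j
      = ((nw 0 : ℝ) * Xbarw 0 j + (nw 1 : ℝ) * Xbarw 1 j) / n := by
    intro j
    rw [hXbar, hXsum j, hXbarw, hXbarw, mul_div_cancel₀ _ (hm 0), mul_div_cancel₀ _ (hm 1)]
  have key : ∀ j, Xbar j * (bhat 1 j - bhat 0 j) - Xbar j * (beta 1 j - beta 0 j)
      + Xbarw 1 j * beta 1 j - Xbarw 1 j * bhat 1 j
      - Xbarw 0 j * beta 0 j + Xbarw 0 j * bhat 0 j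
      = -((Xbarw 1 j - Xbarw 0 j) * (bhatbar j - betabar j)) := by
    intro j
    rw [hXbar', hbetabar, hbhatbar, hnR]
    have h0 := hm 0; have h1 := hm 1
    field_simp
    ring
  have hsum : ∑ j, (Xbar j * (bhat 1 j - bhat 0 j) - Xbar j * (beta 1 j - beta 0 j)
      + Xbarw 1 j * beta 1 j - Xbarw 1 j * bhat 1 j
      - Xbarw 0 j * beta 0 j + Xbarw 0 j * bhat 0 j)
      = ∑ j, -((Xbarw 1 j - Xbarw 0 j) * (bhatbar j - betabar j)) :=
    Finset.sum_congr rfl fun j _ => key j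
  simp only [Finset.sum_add_distrib, Finset.sum_sub_distrib, Finset.sum_neg_distrib]
    at hsum
  rw [htauhat, htaubar, hchat 0, hchat 1]
  linarith
end

section
/- Fix a fold F ⊆ {1, …, n} of size n^(k), with treatment counts n₀^(k), n₁^(k) ≥ 1 inside F, and fixed vectors β̂^(0,−k), β̂^(1,−k) ∈ ℝ^p. Then the cross-estimation fold estimator satisfies the identity τ̂^(k) = (1/n₁^(k)) Σ_{i ∈ F : W_i = 1} (Y_i − X_i·β̂̄^(−k)) − (1/n₀^(k)) Σ_{i ∈ F : W_i = 0} (Y_i − X_i·β̂̄^(−k)), where β̂̄^(−k) = (n₁^(k) β̂^(0,−k) + n₀^(k) β̂^(1,−k))/n^(k). -/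
open Finset

/-- For a fold F with treatment counts n₀⁽ᵏ⁾, n₁⁽ᵏ⁾ ≥ 1 and fixed
out-of-fold estimates β̂⁽⁰'⁻ᵏ⁾, β̂⁽¹'⁻ᵏ⁾, the cross-estimation fold estimator
τ̂⁽ᵏ⁾ = Ȳ₁⁽ᵏ⁾ − Ȳ₀⁽ᵏ⁾ + (X̄⁽ᵏ⁾ − X̄₁⁽ᵏ⁾)·β̂⁽¹'⁻ᵏ⁾ − (X̄⁽ᵏ⁾ − X̄₀⁽ᵏ⁾)·β̂⁽⁰'⁻ᵏ⁾ satisfies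
τ̂⁽ᵏ⁾ = (1/n₁⁽ᵏ⁾)Σ_{i∈F:Wᵢ=1}(Yᵢ − Xᵢ·β̂̄⁽⁻ᵏ⁾) − (1/n₀⁽ᵏ⁾)Σ_{i∈F:Wᵢ=0}(Yᵢ − Xᵢ·β̂̄⁽⁻ᵏ⁾),
with β̂̄⁽⁻ᵏ⁾ = (n₁⁽ᵏ⁾β̂⁽⁰'⁻ᵏ⁾ + n₀⁽ᵏ⁾β̂⁽¹'⁻ᵏ⁾)/n⁽ᵏ⁾. -/
theorem stmt_9 (n p : ℕ) (F : Finset (Fin n))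
    (X : Fin n → Fin p → ℝ) (Y : Fin n → ℝ) (W : Fin n → Fin 2)
    (bhat : Fin 2 → Fin p → ℝ)
    (nk : ℕ) (hnk : nk = F.card)
    (nkw : Fin 2 → ℕ) (hnkw : ∀ w, nkw w = (F.filter fun i => W i = w).card)
    (hpos : ∀ w, 1 ≤ nkw w)
    (Xbark : Fin p → ℝ) (hXbark : ∀ j, Xbark j = (∑ i ∈ F, X i j) / nk)
    (Xbarkw : Fin 2 → Fin p → ℝ)
    (hXbarkw : ∀ w j, Xbarkw w j = (∑ i ∈ F.filter fun i => W i = w, X i j) / nkw w)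
    (Ybarkw : Fin 2 → ℝ)
    (hYbarkw : ∀ w, Ybarkw w = (∑ i ∈ F.filter fun i => W i = w, Y i) / nkw w)
    (bhatbar : Fin p → ℝ)
    (hbhatbar : ∀ j, bhatbar j = ((nkw 1 : ℝ) * bhat 0 j + (nkw 0 : ℝ) * bhat 1 j) / nk)
    (tauhatk : ℝ)
    (htauhatk : tauhatk
      = Ybarkw 1 - Ybarkw 0 + (∑ j, (Xbark j - Xbarkw 1 j) * bhat 1 j)
        - ∑ j, (Xbark j - Xbarkw 0 j) * bhat 0 j) :
    tauhatk
      = (∑ i ∈ F.filter fun i => W i = 1, (Y i - ∑ j, X i j * bhatbar j)) / nkw 1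
        - (∑ i ∈ F.filter fun i => W i = 0, (Y i - ∑ j, X i j * bhatbar j)) / nkw 0 := by
  classical
  have hW : ∀ i : Fin n, ¬ W i = 0 ↔ W i = 1 := by
    intro i
    constructor
    · intro h
      have h2 : (W i).val < 2 := (W i).isLt
      have h0 : (W i).val ≠ 0 := fun hv => h (Fin.ext (by simpa using hv))
      exact Fin.ext (by simp only [Fin.val_one]; omega)
    · intro h1 h0; rw [h1] at h0; exact absurd h0 (by decide)
  have hFsum : ∀ f : Fin n → ℝ, ∑ i ∈ F, f i
      = (∑ i ∈ F.filter fun i => W i = 0, f i) + ∑ i ∈ F.filter fun i => W i = 1, f i := by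
    intro f
    rw [← Finset.sum_filter_add_sum_filter_not F (fun i => W i = 0) f]
    congr 1
    apply Finset.sum_congr _ fun _ _ => rfl
    exact Finset.filter_congr fun i _ => hW i
  have hcard : (nk : ℝ) = (nkw 0 : ℝ) + (nkw 1 : ℝ) := by
    have := hFsum (fun _ => (1 : ℝ))
    simpa [hnk, hnkw] using this
  have hn0 : (0 : ℝ) < (nkw 0 : ℝ) := by exact_mod_cast hpos 0
  have hn1 : (0 : ℝ) < (nkw 1 : ℝ) := by exact_mod_cast hpos 1
  have hnkpos : (0 : ℝ) < (nk : ℝ) := by rw [hcard]; linarith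
  set rn0 : ℝ := (nkw 0 : ℝ)
  set rn1 : ℝ := (nkw 1 : ℝ)
  set s0 : Fin p → ℝ := fun j => ∑ i ∈ F.filter fun i => W i = 0, X i j with hs0
  set s1 : Fin p → ℝ := fun j => ∑ i ∈ F.filter fun i => W i = 1, X i j with hs1
  set sy0 : ℝ := ∑ i ∈ F.filter fun i => W i = 0, Y i with hsy0
  set sy1 : ℝ := ∑ i ∈ F.filter fun i => W i = 1, Y i with hsy1
  have hswap : ∀ S : Finset (Fin n),
      ∑ i ∈ S, (Y i - ∑ j, X i j * bhatbar j)
        = (∑ i ∈ S, Y i) - ∑ j, (∑ i ∈ S, X i j) * bhatbar j := by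
    intro S
    rw [Finset.sum_sub_distrib]
    congr 1
    rw [Finset.sum_comm]
    exact Finset.sum_congr rfl fun j _ => (Finset.sum_mul _ _ _).symm
  rw [htauhatk, hswap, hswap]
  have hXb : ∀ j, Xbark j = (s0 j + s1 j) / (nk : ℝ) := fun j => by
    rw [hXbark j, hFsum (fun i => X i j)]
  have key : ∀ j, (Xbark j - Xbarkw 1 j) * bhat 1 j - (Xbark j - Xbarkw 0 j) * bhat 0 j
      = (s0 j * bhatbar j) / rn0 - (s1 j * bhatbar j) / rn1 := by
    intro j
    rw [hXb j, hXbarkw 1 j, hXbarkw 0 j, hbhatbar j]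
    show ((s0 j + s1 j) / (nk : ℝ) - s1 j / rn1) * bhat 1 j
        - ((s0 j + s1 j) / (nk : ℝ) - s0 j / rn0) * bhat 0 j
      = s0 j * ((rn1 * bhat 0 j + rn0 * bhat 1 j) / (nk : ℝ)) / rn0
        - s1 j * ((rn1 * bhat 0 j + rn0 * bhat 1 j) / (nk : ℝ)) / rn1
    rw [hcard]
    field_simp
    ring
  have hsum : (∑ j, (Xbark j - Xbarkw 1 j) * bhat 1 j)
      - ∑ j, (Xbark j - Xbarkw 0 j) * bhat 0 j
      = (∑ j, s0 j * bhatbar j) / rn0 - (∑ j, s1 j * bhatbar j) / rn1 := by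
    rw [← Finset.sum_sub_distrib, Finset.sum_div, Finset.sum_div, ← Finset.sum_sub_distrib]
    exact Finset.sum_congr rfl fun j _ => key j
  rw [hYbarkw 1, hYbarkw 0]
  have h1 : sy1 - ∑ j, s1 j * bhatbar j = sy1 - ∑ j, s1 j * bhatbar j := rfl
  rw [sub_div sy1, sub_div sy0]
  linarith [hsum]
end

section
/- Fix a fold of size n^(k) with a fixed treatment assignment having counts n₀^(k), n₁^(k) ≥ 1, and let the fold's samples (X_i, Y_i^(0), Y_i^(1)) be i.i.d. with finite second moments and independent of the estimators β̂^(0,−k), β̂^(1,−k) (which are measurable functions of data outside the fold). Then, conditionally on (β̂^(0,−k), β̂^(1,−k)), the variance of the fold estimator τ̂^(k) equals V_k = Σ_{w ∈ {0,1}} (1/n_w^(k)) · Var[Y^(w) − X·β̂̄^(−k) | β̂^(−k)], where β̂̄^(−k) = (n₁^(k) β̂^(0,−k) + n₀^(k) β̂^(1,−k))/n^(k) and (X, Y^(0), Y^(1)) is distributed as one fold sample. -/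
open MeasureTheory ProbabilityTheory Finset

lemma aux_condexp_transfer {Ω α β : Type*} [MeasurableSpace Ω] [MeasurableSpace α]
    [MeasurableSpace β] (μ : Measure Ω) [IsProbabilityMeasure μ] {S : Ω → α} {B : Ω → β}
    (hS : Measurable S) (hB : Measurable B) (hSB : IndepFun S B μ)
    (φ : α → β → ℝ) (hφ : Measurable (Function.uncurry φ))
    (hint : Integrable (fun ω => φ (S ω) (B ω)) μ) :
    μ[(fun ω => φ (S ω) (B ω)) | MeasurableSpace.comap B inferInstance]
      =ᵐ[μ] fun ω => ∫ s, φ s (B ω) ∂(μ.map S) := by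
  have hm : MeasurableSpace.comap B inferInstance ≤ ‹MeasurableSpace Ω› :=
    hB.comap_le
  haveI : IsProbabilityMeasure (μ.map S) := Measure.isProbabilityMeasure_map hS.aemeasurable
  haveI : IsProbabilityMeasure (μ.map B) := Measure.isProbabilityMeasure_map hB.aemeasurable
  haveI : SigmaFinite (μ.trim hm) := inferInstance
  have hmap : μ.map (fun ω => (S ω, B ω)) = (μ.map S).prod (μ.map B) :=
    (indepFun_iff_map_prod_eq_prod_map_map hS.aemeasurable hB.aemeasurable).mp hSB
  have hφsm : StronglyMeasurable (Function.uncurry φ) := hφ.stronglyMeasurable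
  have hφsm' : AEStronglyMeasurable (Function.uncurry φ) (μ.map (fun ω => (S ω, B ω))) :=
    hφsm.aestronglyMeasurable
  have hint2 : Integrable (Function.uncurry φ) ((μ.map S).prod (μ.map B)) := by
    rw [← hmap, integrable_map_measure hφsm' (hS.prodMk hB).aemeasurable]
    exact hint
  set G : β → ℝ := fun b => ∫ s, φ s b ∂(μ.map S) with hG
  have hGsm : StronglyMeasurable G := hφsm.integral_prod_left'
  have hGBint : Integrable (fun ω => G (B ω)) μ := by
    have h1 : Integrable G (μ.map B) := hint2.integral_prod_right
    rwa [integrable_map_measure hGsm.aestronglyMeasurable hB.aemeasurable] at h1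
  refine (ae_eq_condExp_of_forall_setIntegral_eq hm hint
    (fun s _ _ => hGBint.integrableOn) ?_ ?_).symm
  · rintro s ⟨t, ht, rfl⟩ -
    have e1 : ∫ ω in B ⁻¹' t, G (B ω) ∂μ = ∫ b in t, G b ∂(μ.map B) :=
      (setIntegral_map ht hGsm.aestronglyMeasurable hB.aemeasurable).symm
    have e2 : ∫ ω in B ⁻¹' t, φ (S ω) (B ω) ∂μ
        = ∫ q in Set.univ ×ˢ t, Function.uncurry φ q ∂((μ.map S).prod (μ.map B)) := by
      rw [← hmap, setIntegral_map (MeasurableSet.univ.prod ht) hφsm' (hS.prodMk hB).aemeasurable]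
      have hpre : (fun ω => (S ω, B ω)) ⁻¹' (Set.univ ×ˢ t) = B ⁻¹' t := by
        ext ω; simp
      rw [hpre]
      rfl
    have e3 : ∫ q in Set.univ ×ˢ t, Function.uncurry φ q ∂((μ.map S).prod (μ.map B))
        = ∫ b in t, G b ∂(μ.map B) := by
      rw [← Measure.prod_restrict Set.univ t, Measure.restrict_univ]
      have hint3 : Integrable (Function.uncurry φ) ((μ.map S).prod ((μ.map B).restrict t)) := by
        have h4 : (μ.map S).prod ((μ.map B).restrict t)
            = ((μ.map S).restrict Set.univ).prod ((μ.map B).restrict t) := by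
          rw [Measure.restrict_univ]
        rw [h4, Measure.prod_restrict]
        exact hint2.restrict
      exact integral_prod_symm _ hint3
    rw [e1, e2, e3]
  · refine StronglyMeasurable.aestronglyMeasurable ?_
    exact hGsm.comp_measurable (Measurable.of_comap_le le_rfl)

lemma aux_memLp_two_mul {Ω : Type*} [MeasurableSpace Ω] {μ : Measure Ω}
    {f g : Ω → ℝ} (h : IndepFun f g μ) (hf : MemLp f 2 μ) (hg : MemLp g 2 μ) :
    MemLp (fun ω => f ω * g ω) 2 μ := by
  have hsq : IndepFun (fun ω => f ω ^ 2) (fun ω => g ω ^ 2) μ :=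
    h.comp (measurable_id.pow_const 2) (measurable_id.pow_const 2)
  have hint : Integrable ((fun ω => f ω ^ 2) * fun ω => g ω ^ 2) μ :=
    hsq.integrable_mul hf.integrable_sq hg.integrable_sq
  show MemLp (f * g) 2 μ
  rw [memLp_two_iff_integrable_sq (hf.aestronglyMeasurable.mul hg.aestronglyMeasurable)]
  have : (fun x => (f * g) x ^ 2) = ((fun ω => f ω ^ 2) * fun ω => g ω ^ 2) := by
    ext x; simp [mul_pow]
  rw [this]
  exact hint

/-- For a fold with fixed treatment assignment (both groups nonempty),
i.i.d. fold samples (Xᵢ, Yᵢ⁽⁰⁾, Yᵢ⁽¹⁾) with finite second moments, independent of the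
out-of-fold estimators (β̂⁽⁰'⁻ᵏ⁾, β̂⁽¹'⁻ᵏ⁾), the conditional variance of the fold
estimator τ̂⁽ᵏ⁾ given the estimators is
V_k = Σ_w (1/n_w⁽ᵏ⁾)·Var[Y⁽ʷ⁾ − X·β̂̄⁽⁻ᵏ⁾ | β̂⁽⁻ᵏ⁾]. -/
theorem stmt_10 {Ω : Type*} [MeasurableSpace Ω] (μ : Measure Ω) [IsProbabilityMeasure μ]
    (nk p : ℕ) (w : Fin nk → Fin 2)
    (nw : Fin 2 → ℕ) (hnw : ∀ g, nw g = (univ.filter fun i => w i = g).card)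
    (hpos : ∀ g, 1 ≤ nw g)
    (X : Fin nk → Ω → Fin p → ℝ) (Y0 Y1 : Fin nk → Ω → ℝ)
    (hXmeas : ∀ i, Measurable (X i))
    (hY0meas : ∀ i, Measurable (Y0 i)) (hY1meas : ∀ i, Measurable (Y1 i))
    -- the fold samples are i.i.d. with common law ν and finite second moments :
    (ν : Measure ((Fin p → ℝ) × ℝ × ℝ))
    (hlaw : ∀ i, μ.map (fun ω => (X i ω, Y0 i ω, Y1 i ω)) = ν)
    (hiid : iIndepFun (fun i ω => (X i ω, Y0 i ω, Y1 i ω)) μ)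
    (hX2 : ∀ i j, MemLp (fun ω => X i ω j) 2 μ)
    (hY02 : ∀ i, MemLp (Y0 i) 2 μ) (hY12 : ∀ i, MemLp (Y1 i) 2 μ)
    -- the estimators, independent of the fold samples :
    (bhat : Fin 2 → Ω → Fin p → ℝ) (hbhatmeas : ∀ g, Measurable (bhat g))
    (hbhat2 : ∀ g j, MemLp (fun ω => bhat g ω j) 2 μ)
    (hindep : IndepFun (fun ω => fun i => (X i ω, Y0 i ω, Y1 i ω))
      (fun ω => (bhat 0 ω, bhat 1 ω)) μ)
    -- observed outcomes and fold averages :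
    (Y : Fin nk → Ω → ℝ) (hY : ∀ i ω, Y i ω = if w i = 1 then Y1 i ω else Y0 i ω)
    (Xbark : Ω → Fin p → ℝ) (hXbark : ∀ ω j, Xbark ω j = (∑ i, X i ω j) / nk)
    (Xbarkw : Fin 2 → Ω → Fin p → ℝ)
    (hXbarkw : ∀ g ω j,
      Xbarkw g ω j = (∑ i ∈ univ.filter fun i => w i = g, X i ω j) / nw g)
    (Ybarkw : Fin 2 → Ω → ℝ)
    (hYbarkw : ∀ g ω, Ybarkw g ω = (∑ i ∈ univ.filter fun i => w i = g, Y i ω) / nw g)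
    -- the fold estimator :
    (tauhatk : Ω → ℝ)
    (htauhatk : ∀ ω, tauhatk ω
      = Ybarkw 1 ω - Ybarkw 0 ω + (∑ j, (Xbark ω j - Xbarkw 1 ω j) * bhat 1 ω j)
        - ∑ j, (Xbark ω j - Xbarkw 0 ω j) * bhat 0 ω j)
    -- V_k as a function of the estimators :
    (Vk : (Fin p → ℝ) → (Fin p → ℝ) → ℝ)
    (hVk : ∀ b0 b1, Vk b0 b1 = ∑ g : Fin 2, (1 / (nw g : ℝ))
      * variance (fun s : (Fin p → ℝ) × ℝ × ℝ =>
          (if g = 1 then s.2.2 else s.2.1)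
            - ∑ j, s.1 j * (((nw 1 : ℝ) * b0 j + (nw 0 : ℝ) * b1 j) / nk)) ν) :
    -- conclusion : the conditional variance of τ̂⁽ᵏ⁾ given (β̂⁽⁰⁾, β̂⁽¹⁾) equals V_k
    μ[fun ω => (tauhatk ω
        - (μ[tauhatk | MeasurableSpace.comap (fun ω' => (bhat 0 ω', bhat 1 ω')) inferInstance]) ω) ^ 2
      | MeasurableSpace.comap (fun ω' => (bhat 0 ω', bhat 1 ω')) inferInstance]
      =ᵐ[μ] fun ω => Vk (bhat 0 ω) (bhat 1 ω) := by
  classical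
  -- notation
  set S : Ω → (Fin nk → (Fin p → ℝ) × ℝ × ℝ) := fun ω i => (X i ω, Y0 i ω, Y1 i ω) with hS
  set B : Ω → (Fin p → ℝ) × (Fin p → ℝ) := fun ω => (bhat 0 ω, bhat 1 ω) with hB
  have hSmeas : Measurable S :=
    measurable_pi_lambda _ fun i => ((hXmeas i).prodMk ((hY0meas i).prodMk (hY1meas i)))
  have hBmeas : Measurable B := (hbhatmeas 0).prodMk (hbhatmeas 1)
  have hSB : IndepFun S B μ := hindep
  -- numeric facts
  have fin2 : ∀ g : Fin 2, g = 0 ∨ g = 1 := by decide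
  have h01 : (0 : Fin 2) ≠ 1 := by decide
  have hn0 : ((nw 0 : ℝ)) ≠ 0 := by
    have := hpos 0; positivity
  have hn1 : ((nw 1 : ℝ)) ≠ 0 := by
    have := hpos 1; positivity
  have hfilter : filter (fun i => ¬ w i = 0) (univ : Finset (Fin nk))
      = filter (fun i => w i = 1) univ := by
    apply Finset.filter_congr
    intro i _
    rcases fin2 (w i) with h | h <;> simp [h, Fin.ext_iff]
  have hcard : nk = nw 0 + nw 1 := by
    have h3 := Finset.card_filter_add_card_filter_not
      (s := (univ : Finset (Fin nk))) (p := fun i => w i = 0)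
    rw [hfilter] at h3
    rw [hnw 0, hnw 1, h3, card_univ, Fintype.card_fin]
  have hsplit : ∀ f : Fin nk → ℝ, ∑ i, f i
      = (∑ i ∈ filter (fun i => w i = 0) univ, f i)
        + ∑ i ∈ filter (fun i => w i = 1) univ, f i := by
    intro f
    rw [← Finset.sum_filter_add_sum_filter_not univ (fun i => w i = 0) f, hfilter]
  have hnkR : (nk : ℝ) = (nw 0 : ℝ) + (nw 1 : ℝ) := by rw [hcard]; push_cast; ring
  have hnk : ((nk : ℝ)) ≠ 0 := by rw [hnkR]; positivity
  -- the centered functions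
  set βbar : (Fin p → ℝ) × (Fin p → ℝ) → Fin p → ℝ :=
    fun b j => ((nw 1 : ℝ) * b.1 j + (nw 0 : ℝ) * b.2 j) / nk with hβbar
  set A : Fin 2 → ((Fin p → ℝ) × ℝ × ℝ) → ((Fin p → ℝ) × (Fin p → ℝ)) → ℝ :=
    fun g s b => (if g = 1 then s.2.2 else s.2.1) - ∑ j, s.1 j * βbar b j with hA
  set c : Fin nk → ℝ := fun i => if w i = 1 then (nw 1 : ℝ)⁻¹ else -(nw 0 : ℝ)⁻¹ with hc
  set F : (Fin nk → (Fin p → ℝ) × ℝ × ℝ) → ((Fin p → ℝ) × (Fin p → ℝ)) → ℝ :=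
    fun s b => ∑ i, c i * A (w i) (s i) b with hF
  -- measurability of the pieces
  have hβbarmeas : ∀ j, Measurable (fun b : (Fin p → ℝ) × (Fin p → ℝ) => βbar b j) := by
    intro j
    apply Measurable.div_const
    exact (((measurable_pi_apply j).comp measurable_fst).const_mul _).add
      (((measurable_pi_apply j).comp measurable_snd).const_mul _)
  have hAmeas : ∀ g, Measurable (Function.uncurry (A g)) := by
    intro g
    have hrfl : Function.uncurry (A g)
        = fun q : ((Fin p → ℝ) × ℝ × ℝ) × ((Fin p → ℝ) × (Fin p → ℝ)) =>
          (if g = 1 then q.1.2.2 else q.1.2.1) - ∑ j, q.1.1 j * βbar q.2 j := rfl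
    rw [hrfl]
    apply Measurable.sub
    · by_cases h : g = 1
      · simp only [if_pos h]
        exact measurable_fst.snd.snd
      · simp only [if_neg h]
        exact measurable_fst.snd.fst
    · apply Finset.measurable_sum
      intro j _
      exact (measurable_fst.fst.eval).mul ((hβbarmeas j).comp measurable_snd)
  have hFmeas : Measurable (Function.uncurry F) := by
    have hrfl : Function.uncurry F
        = fun q : (Fin nk → (Fin p → ℝ) × ℝ × ℝ) × ((Fin p → ℝ) × (Fin p → ℝ)) =>
          ∑ i, c i * A (w i) (q.1 i) q.2 := rfl
    rw [hrfl]
    apply Finset.measurable_sum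
    intro i _
    apply Measurable.const_mul
    have : (fun q : (Fin nk → (Fin p → ℝ) × ℝ × ℝ) × ((Fin p → ℝ) × (Fin p → ℝ)) =>
        A (w i) (q.1 i) q.2)
        = Function.uncurry (A (w i)) ∘ (fun q => (q.1 i, q.2)) := rfl
    rw [this]
    exact (hAmeas (w i)).comp ((measurable_fst.eval).prodMk measurable_snd)
  have hc0' : ∀ i, w i = 0 → c i = -(nw 0 : ℝ)⁻¹ := by
    intro i hw
    simp only [hc]
    rw [hw]
    exact if_neg h01
  have hc1' : ∀ i, w i = 1 → c i = (nw 1 : ℝ)⁻¹ := by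
    intro i hw
    simp only [hc]
    rw [hw]
    exact if_pos rfl
  -- grouped-sum identity
  have group_sum : ∀ (D : Fin nk → ℝ) (E : Fin nk → Fin p → ℝ) (tt : Fin p → ℝ),
      ∑ i, c i * (D i - ∑ j, E i j * tt j)
        = (nw 1 : ℝ)⁻¹ * ((∑ i ∈ filter (fun i => w i = 1) univ, D i)
            - ∑ j, (∑ i ∈ filter (fun i => w i = 1) univ, E i j) * tt j)
          - (nw 0 : ℝ)⁻¹ * ((∑ i ∈ filter (fun i => w i = 0) univ, D i)
            - ∑ j, (∑ i ∈ filter (fun i => w i = 0) univ, E i j) * tt j) := by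
    intro D E tt
    rw [hsplit (fun i => c i * (D i - ∑ j, E i j * tt j))]
    have hgrp : ∀ (g : Fin 2) (r : ℝ), (∀ i, w i = g → c i = r) →
        ∑ i ∈ filter (fun i => w i = g) univ, c i * (D i - ∑ j, E i j * tt j)
          = r * ((∑ i ∈ filter (fun i => w i = g) univ, D i)
            - ∑ j, (∑ i ∈ filter (fun i => w i = g) univ, E i j) * tt j) := by
      intro g r hr
      calc ∑ i ∈ filter (fun i => w i = g) univ, c i * (D i - ∑ j, E i j * tt j)
          = ∑ i ∈ filter (fun i => w i = g) univ, r * (D i - ∑ j, E i j * tt j) :=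
            Finset.sum_congr rfl fun i hi => by rw [hr i (Finset.mem_filter.mp hi).2]
        _ = r * ∑ i ∈ filter (fun i => w i = g) univ, (D i - ∑ j, E i j * tt j) := by
            rw [Finset.mul_sum]
        _ = r * ((∑ i ∈ filter (fun i => w i = g) univ, D i)
            - ∑ j, (∑ i ∈ filter (fun i => w i = g) univ, E i j) * tt j) := by
            congr 1
            rw [Finset.sum_sub_distrib]
            congr 1
            rw [Finset.sum_comm]
            exact Finset.sum_congr rfl fun j _ => (Finset.sum_mul _ _ _).symm
    rw [hgrp 0 _ hc0', hgrp 1 _ hc1']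
    ring
  -- the scalar identity
  have scalar : ∀ (U V : ℝ) (P Q β0 β1 : Fin p → ℝ),
      U / (nw 1 : ℝ) - V / (nw 0 : ℝ)
        + ∑ j, ((Q j + P j) / (nk : ℝ) - P j / (nw 1 : ℝ)) * β1 j
        - ∑ j, ((Q j + P j) / (nk : ℝ) - Q j / (nw 0 : ℝ)) * β0 j
      = (nw 1 : ℝ)⁻¹ * (U - ∑ j, P j * (((nw 1 : ℝ) * β0 j + (nw 0 : ℝ) * β1 j) / (nk : ℝ)))
        - (nw 0 : ℝ)⁻¹ * (V - ∑ j, Q j * (((nw 1 : ℝ) * β0 j + (nw 0 : ℝ) * β1 j) / (nk : ℝ))) := by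
    intro U V P Q β0 β1
    have per : ∀ j, ((Q j + P j) / (nk : ℝ) - P j / (nw 1 : ℝ)) * β1 j
        - ((Q j + P j) / (nk : ℝ) - Q j / (nw 0 : ℝ)) * β0 j
        = (nw 0 : ℝ)⁻¹ * (Q j * (((nw 1 : ℝ) * β0 j + (nw 0 : ℝ) * β1 j) / (nk : ℝ)))
          - (nw 1 : ℝ)⁻¹ * (P j * (((nw 1 : ℝ) * β0 j + (nw 0 : ℝ) * β1 j) / (nk : ℝ))) := by
      intro j
      rw [hnkR]
      field_simp
      ring
    have h := Finset.sum_congr rfl (fun j (_ : j ∈ (univ : Finset (Fin p))) => per j)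
    rw [Finset.sum_sub_distrib, Finset.sum_sub_distrib, ← Finset.mul_sum, ← Finset.mul_sum] at h
    linear_combination h
  -- the key algebraic identity
  have key : ∀ ω, tauhatk ω = F (S ω) (B ω) := by
    intro ω
    have hAY : ∀ i, A (w i) (S ω i) (B ω)
        = Y i ω - ∑ j, X i ω j
            * (((nw 1 : ℝ) * bhat 0 ω j + (nw 0 : ℝ) * bhat 1 ω j) / (nk : ℝ)) := by
      intro i
      rw [hY i ω]
    have hFeq : F (S ω) (B ω) = ∑ i, c i * (Y i ω - ∑ j, X i ω j
        * (((nw 1 : ℝ) * bhat 0 ω j + (nw 0 : ℝ) * bhat 1 ω j) / (nk : ℝ))) :=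
      Finset.sum_congr rfl fun i _ => by rw [hAY i]
    have eS1 : ∑ j, (Xbark ω j - Xbarkw 1 ω j) * bhat 1 ω j
        = ∑ j, (((∑ i ∈ filter (fun i => w i = 0) univ, X i ω j)
              + ∑ i ∈ filter (fun i => w i = 1) univ, X i ω j) / (nk : ℝ)
            - (∑ i ∈ filter (fun i => w i = 1) univ, X i ω j) / (nw 1 : ℝ)) * bhat 1 ω j :=
      Finset.sum_congr rfl fun j _ => by
        rw [hXbark ω j, hXbarkw 1 ω j, hsplit (fun i => X i ω j)]
    have eS0 : ∑ j, (Xbark ω j - Xbarkw 0 ω j) * bhat 0 ω j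
        = ∑ j, (((∑ i ∈ filter (fun i => w i = 0) univ, X i ω j)
              + ∑ i ∈ filter (fun i => w i = 1) univ, X i ω j) / (nk : ℝ)
            - (∑ i ∈ filter (fun i => w i = 0) univ, X i ω j) / (nw 0 : ℝ)) * bhat 0 ω j :=
      Finset.sum_congr rfl fun j _ => by
        rw [hXbark ω j, hXbarkw 0 ω j, hsplit (fun i => X i ω j)]
    rw [htauhatk ω, hYbarkw 1 ω, hYbarkw 0 ω, eS1, eS0, hFeq,
      group_sum (fun i => Y i ω) (fun i j => X i ω j)
        (fun j => ((nw 1 : ℝ) * bhat 0 ω j + (nw 0 : ℝ) * bhat 1 ω j) / (nk : ℝ))]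
    exact scalar (∑ i ∈ filter (fun i => w i = 1) univ, Y i ω)
      (∑ i ∈ filter (fun i => w i = 0) univ, Y i ω)
      (fun j => ∑ i ∈ filter (fun i => w i = 1) univ, X i ω j)
      (fun j => ∑ i ∈ filter (fun i => w i = 0) univ, X i ω j)
      (bhat 0 ω) (bhat 1 ω)
  -- MemLp facts
  have hβbarB2 : ∀ j, MemLp (fun ω => βbar (B ω) j) 2 μ := by
    intro j
    have : (fun ω => βbar (B ω) j)
        = fun ω => ((nk : ℝ))⁻¹ * ((nw 1 : ℝ) * bhat 0 ω j + (nw 0 : ℝ) * bhat 1 ω j) := by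
      funext ω; simp [hβbar, hB, div_eq_inv_mul]
    rw [this]
    exact (((hbhat2 0 j).const_mul _).add ((hbhat2 1 j).const_mul _)).const_mul _
  have hXβindep : ∀ (i : Fin nk) (j : Fin p),
      IndepFun (fun ω => X i ω j) (fun ω => βbar (B ω) j) μ := by
    intro i j
    have m1 : Measurable (fun s : Fin nk → (Fin p → ℝ) × ℝ × ℝ => (s i).1 j) :=
      ((measurable_pi_apply i).fst).eval
    exact hSB.comp m1 (hβbarmeas j)
  have hYpart2 : ∀ i, MemLp (fun ω => if w i = 1 then Y1 i ω else Y0 i ω) 2 μ := by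
    intro i
    by_cases h : w i = 1 <;> simp only [h, if_true, if_false]
    · exact hY12 i
    · exact hY02 i
  -- MemLp 2 of A-terms with fixed b
  have hAb2 : ∀ i (b : (Fin p → ℝ) × (Fin p → ℝ)), MemLp (fun ω => A (w i) (S ω i) b) 2 μ := by
    intro i b
    have h0 : (fun ω => A (w i) (S ω i) b)
        = fun ω => (if w i = 1 then Y1 i ω else Y0 i ω) - ∑ j, X i ω j * βbar b j := rfl
    rw [h0]
    have h1 : (fun ω => ∑ j, X i ω j * βbar b j)
        = ∑ j, (fun ω => X i ω j * βbar b j) := by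
      funext ω; simp [Finset.sum_apply]
    have h2 : MemLp (fun ω => ∑ j, X i ω j * βbar b j) 2 μ := by
      rw [h1]
      refine memLp_finset_sum' _ fun j _ => ?_
      have h3 : (fun ω => X i ω j * βbar b j) = fun ω => βbar b j * X i ω j := by
        funext ω; ring
      rw [h3]
      exact (hX2 i j).const_mul _
    exact (hYpart2 i).sub h2
  -- MemLp 2 of the fold estimator with the plugged-in estimators
  have hXβ2 : ∀ i j, MemLp (fun ω => X i ω j * βbar (B ω) j) 2 μ :=
    fun i j => aux_memLp_two_mul (hXβindep i j) (hX2 i j) (hβbarB2 j)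
  have hG2 : MemLp (fun ω => F (S ω) (B ω)) 2 μ := by
    have h1 : (fun ω => F (S ω) (B ω))
        = ∑ i, (fun ω => c i * A (w i) (S ω i) (B ω)) := by
      funext ω; simp [hF, Finset.sum_apply]
    rw [h1]
    refine memLp_finset_sum' _ fun i _ => ?_
    apply MemLp.const_mul
    have h0 : (fun ω => A (w i) (S ω i) (B ω))
        = fun ω => (if w i = 1 then Y1 i ω else Y0 i ω) - ∑ j, X i ω j * βbar (B ω) j := rfl
    rw [h0]
    have h2 : (fun ω => ∑ j, X i ω j * βbar (B ω) j)
        = ∑ j, (fun ω => X i ω j * βbar (B ω) j) := by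
      funext ω; simp [Finset.sum_apply]
    have h3 : MemLp (fun ω => ∑ j, X i ω j * βbar (B ω) j) 2 μ := by
      rw [h2]; exact memLp_finset_sum' _ fun j _ => hXβ2 i j
    exact (hYpart2 i).sub h3
  
  -- measurability of A with fixed b
  have hAbmeas : ∀ g (b : (Fin p → ℝ) × (Fin p → ℝ)),
      Measurable (fun s : (Fin p → ℝ) × ℝ × ℝ => A g s b) := by
    intro g b
    have h0 : (fun s : (Fin p → ℝ) × ℝ × ℝ => A g s b)
        = Function.uncurry (A g) ∘ (fun s => (s, b)) := rfl
    rw [h0]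
    exact (hAmeas g).comp (measurable_id.prodMk measurable_const)
  -- variance identity for fixed b
  have hvar : ∀ b : (Fin p → ℝ) × (Fin p → ℝ),
      variance (fun ω => F (S ω) b) μ = Vk b.1 b.2 := by
    intro b
    have hsum : (fun ω => F (S ω) b) = ∑ i, (fun ω => c i * A (w i) (S ω i) b) := by
      funext ω; simp [hF, Finset.sum_apply]
    have hmem : ∀ i ∈ (univ : Finset (Fin nk)),
        MemLp (fun ω => c i * A (w i) (S ω i) b) 2 μ :=
      fun i _ => (hAb2 i b).const_mul _
    have hpair : Set.Pairwise ↑(univ : Finset (Fin nk)) fun i j =>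
        IndepFun (fun ω => c i * A (w i) (S ω i) b) (fun ω => c j * A (w j) (S ω j) b) μ := by
      intro i _ j _ hij
      exact (hiid.indepFun hij).comp ((hAbmeas (w i) b).const_mul (c i))
        ((hAbmeas (w j) b).const_mul (c j))
    rw [hsum, IndepFun.variance_sum hmem hpair]
    have hvar_i : ∀ i, variance (fun ω => c i * A (w i) (S ω i) b) μ
        = (c i) ^ 2 * variance (fun s => A (w i) s b) ν := by
      intro i
      rw [variance_const_mul]
      congr 1
      have hid : IdentDistrib (fun ω => A (w i) (S ω i) b) (fun s => A (w i) s b) μ ν := by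
        refine ⟨((hAbmeas (w i) b).comp
          ((hXmeas i).prodMk ((hY0meas i).prodMk (hY1meas i)))).aemeasurable,
          (hAbmeas (w i) b).aemeasurable, ?_⟩
        rw [← hlaw i,
          Measure.map_map (hAbmeas (w i) b) ((hXmeas i).prodMk ((hY0meas i).prodMk (hY1meas i)))]
        rfl
      exact hid.variance_eq
    rw [Finset.sum_congr rfl fun i _ => hvar_i i,
      hsplit (fun i => (c i) ^ 2 * variance (fun s => A (w i) s b) ν)]
    have e0 : ∑ i ∈ filter (fun i => w i = 0) univ,
        (c i) ^ 2 * variance (fun s => A (w i) s b) ν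
        = (nw 0 : ℝ) * (((nw 0 : ℝ)⁻¹) ^ 2 * variance (fun s => A 0 s b) ν) := by
      rw [Finset.sum_congr rfl fun i hi => by
        rw [hc0' i (Finset.mem_filter.mp hi).2, (Finset.mem_filter.mp hi).2, neg_sq]]
      rw [Finset.sum_const, ← hnw 0, nsmul_eq_mul]
    have e1 : ∑ i ∈ filter (fun i => w i = 1) univ,
        (c i) ^ 2 * variance (fun s => A (w i) s b) ν
        = (nw 1 : ℝ) * (((nw 1 : ℝ)⁻¹) ^ 2 * variance (fun s => A 1 s b) ν) := by
      rw [Finset.sum_congr rfl fun i hi => by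
        rw [hc1' i (Finset.mem_filter.mp hi).2, (Finset.mem_filter.mp hi).2]]
      rw [Finset.sum_const, ← hnw 1, nsmul_eq_mul]
    rw [e0, e1, hVk, Fin.sum_univ_two]
    have hA0 : (fun s : (Fin p → ℝ) × ℝ × ℝ =>
        (if (0 : Fin 2) = 1 then s.2.2 else s.2.1)
          - ∑ j, s.1 j * (((nw 1 : ℝ) * b.1 j + (nw 0 : ℝ) * b.2 j) / nk))
        = fun s => A 0 s b := rfl
    have hA1 : (fun s : (Fin p → ℝ) × ℝ × ℝ =>
        (if (1 : Fin 2) = 1 then s.2.2 else s.2.1)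
          - ∑ j, s.1 j * (((nw 1 : ℝ) * b.1 j + (nw 0 : ℝ) * b.2 j) / nk))
        = fun s => A 1 s b := rfl
    rw [hA0, hA1]
    field_simp
  
  -- the conditional mean as a function of b
  set m : (Fin p → ℝ) × (Fin p → ℝ) → ℝ := fun b => ∫ ω, F (S ω) b ∂μ with hm
  have hFb_meas : ∀ b, Measurable (fun s => F s b) := by
    intro b
    have h0 : (fun s => F s b) = Function.uncurry F ∘ (fun s => (s, b)) := rfl
    rw [h0]
    exact hFmeas.comp (measurable_id.prodMk measurable_const)
  have hFb_mem : ∀ b, MemLp (fun ω => F (S ω) b) 2 μ := by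
    intro b
    have h0 : (fun ω => F (S ω) b) = ∑ i, (fun ω => c i * A (w i) (S ω i) b) := by
      funext ω; simp [hF, Finset.sum_apply]
    rw [h0]
    exact memLp_finset_sum' _ fun i _ => (hAb2 i b).const_mul _
  -- explicit formula for m
  have hm_eq : ∀ b, m b = ∑ i, c i * ((∫ ω, (if w i = 1 then Y1 i ω else Y0 i ω) ∂μ)
      - ∑ j, (∫ ω, X i ω j ∂μ) * βbar b j) := by
    intro b
    have h0 : m b = ∫ ω, ∑ i, c i * ((if w i = 1 then Y1 i ω else Y0 i ω)
        - ∑ j, X i ω j * βbar b j) ∂μ := rfl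
    rw [h0, integral_finset_sum]
    swap
    · intro i _
      exact ((hAb2 i b).const_mul (c i)).integrable one_le_two
    refine Finset.sum_congr rfl fun i _ => ?_
    rw [integral_const_mul]
    congr 1
    rw [integral_sub ((hYpart2 i).integrable one_le_two)]
    swap
    · refine integrable_finset_sum _ fun j _ => ?_
      exact (((hX2 i j).integrable one_le_two).mul_const _)
    congr 1
    rw [integral_finset_sum]
    swap
    · intro j _
      exact (((hX2 i j).integrable one_le_two).mul_const _)
    exact Finset.sum_congr rfl fun j _ => integral_mul_const _ _
  have hmfun : m = fun b => ∑ i, c i * ((∫ ω, (if w i = 1 then Y1 i ω else Y0 i ω) ∂μ)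
      - ∑ j, (∫ ω, X i ω j ∂μ) * βbar b j) := funext hm_eq
  have hmmeas : Measurable m := by
    rw [hmfun]
    refine Finset.measurable_sum _ fun i _ => Measurable.const_mul ?_ _
    refine Measurable.sub measurable_const ?_
    exact Finset.measurable_sum _ fun j _ => (hβbarmeas j).const_mul _
  have hM2 : MemLp (fun ω => m (B ω)) 2 μ := by
    have h0 : (fun ω => m (B ω)) = ∑ i, (fun ω =>
        c i * ((∫ ω', (if w i = 1 then Y1 i ω' else Y0 i ω') ∂μ)
          - ∑ j, (∫ ω', X i ω' j ∂μ) * βbar (B ω) j)) := by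
      funext ω
      rw [Finset.sum_apply]
      exact hm_eq (B ω)
    rw [h0]
    refine memLp_finset_sum' _ fun i _ => MemLp.const_mul ?_ _
    refine (memLp_const _).sub ?_
    have h1 : (fun ω => ∑ j, (∫ ω', X i ω' j ∂μ) * βbar (B ω) j)
        = ∑ j, (fun ω => (∫ ω', X i ω' j ∂μ) * βbar (B ω) j) := by
      funext ω; rw [Finset.sum_apply]
    rw [h1]
    exact memLp_finset_sum' _ fun j _ => (hβbarB2 j).const_mul _
  -- first transfer : conditional expectation of the fold estimator
  have htau_eq : tauhatk = fun ω => F (S ω) (B ω) := funext key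
  have hGint : Integrable (fun ω => F (S ω) (B ω)) μ := hG2.integrable one_le_two
  have hT1 := aux_condexp_transfer μ hSmeas hBmeas hSB F hFmeas hGint
  have hmap_int : ∀ b, ∫ s, F s b ∂(μ.map S) = m b := fun b =>
    integral_map hSmeas.aemeasurable (hFb_meas b).aestronglyMeasurable
  have hcond1 : μ[tauhatk | MeasurableSpace.comap B inferInstance]
      =ᵐ[μ] fun ω => m (B ω) := by
    rw [htau_eq]
    exact hT1.trans (Filter.Eventually.of_forall fun ω => hmap_int (B ω))
  -- second transfer : conditional second moment
  set φ2 : (Fin nk → (Fin p → ℝ) × ℝ × ℝ) → ((Fin p → ℝ) × (Fin p → ℝ)) → ℝ :=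
    fun s b => (F s b - m b) ^ 2 with hφ2
  have hφ2meas : Measurable (Function.uncurry φ2) := by
    have h0 : Function.uncurry φ2
        = fun q => (Function.uncurry F q - m q.2) ^ 2 := rfl
    rw [h0]
    exact (hFmeas.sub (hmmeas.comp measurable_snd)).pow_const 2
  have hφ2int : Integrable (fun ω => φ2 (S ω) (B ω)) μ := by
    have hsub : MemLp ((fun ω => F (S ω) (B ω)) - fun ω => m (B ω)) 2 μ := hG2.sub hM2
    exact hsub.integrable_sq
  have hT2 := aux_condexp_transfer μ hSmeas hBmeas hSB φ2 hφ2meas hφ2int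
  -- value of the conditional second moment
  have hfinal : ∀ b : (Fin p → ℝ) × (Fin p → ℝ),
      ∫ s, φ2 s b ∂(μ.map S) = Vk b.1 b.2 := by
    intro b
    have hmeas2 : Measurable (fun s => φ2 s b) :=
      ((hFb_meas b).sub measurable_const).pow_const 2
    have h1 : ∫ s, φ2 s b ∂(μ.map S) = ∫ ω, (F (S ω) b - m b) ^ 2 ∂μ :=
      integral_map hSmeas.aemeasurable hmeas2.aestronglyMeasurable
    rw [h1, ← hvar b, variance_eq_integral (hFb_mem b).aestronglyMeasurable.aemeasurable]
  -- assemble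
  have hc2 : (fun ω => (tauhatk ω
      - (μ[tauhatk | MeasurableSpace.comap B inferInstance]) ω) ^ 2)
      =ᵐ[μ] fun ω => φ2 (S ω) (B ω) := by
    filter_upwards [hcond1] with ω hω
    rw [hω, key ω]
  calc μ[(fun ω => (tauhatk ω
        - (μ[tauhatk | MeasurableSpace.comap B inferInstance]) ω) ^ 2)
      | MeasurableSpace.comap B inferInstance]
      =ᵐ[μ] μ[(fun ω => φ2 (S ω) (B ω)) | MeasurableSpace.comap B inferInstance] :=
        condExp_congr_ae hc2
    _ =ᵐ[μ] fun ω => ∫ s, φ2 s (B ω) ∂(μ.map S) := hT2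
    _ =ᵐ[μ] fun ω => Vk (bhat 0 ω) (bhat 1 ω) :=
        Filter.Eventually.of_forall fun ω => hfinal (B ω)
end

section
/- Fix a treatment assignment W₁, …, Wₙ ∈ {0,1} with n₀, n₁ ≥ 1, arbitrary real-valued functions μ^(0), μ^(1) on ℝ^p, and for each i arbitrary predictions μ̂^{(0,−i)}(X_i), μ̂^{(1,−i)}(X_i) ∈ ℝ. Then the non-parametric adjusted estimator τ̂ decomposes as τ̂ = (1/n₁)Σ_{W_i=1}(Y_i − μ^(1)(X_i)) − (1/n₀)Σ_{W_i=0}(Y_i − μ^(0)(X_i)) + (1/n)Σ_{i=1}^n (μ^(1)(X_i) − μ^(0)(X_i)) + R, where R = Σ_{i=1}^n ((−1)^{W_i}/n_{W_i})·[(n₀/n)(μ̂^{(1,−i)}(X_i) − μ^(1)(X_i)) + (n₁/n)(μ̂^{(0,−i)}(X_i) − μ^(0)(X_i))]. -/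
open Finset

/-- Algebraic decomposition of the non-parametric adjusted estimator:
τ̂ = (1/n₁)Σ_{Wᵢ=1}(Yᵢ − μ⁽¹⁾(Xᵢ)) − (1/n₀)Σ_{Wᵢ=0}(Yᵢ − μ⁽⁰⁾(Xᵢ))
    + (1/n)Σᵢ(μ⁽¹⁾(Xᵢ) − μ⁽⁰⁾(Xᵢ)) + R,
where R = Σᵢ ((−1)^{Wᵢ}/n_{Wᵢ})·[(n₀/n)(μ̂⁽¹'⁻ⁱ⁾(Xᵢ) − μ⁽¹⁾(Xᵢ))
          + (n₁/n)(μ̂⁽⁰'⁻ⁱ⁾(Xᵢ) − μ⁽⁰⁾(Xᵢ))]. -/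
theorem stmt_13 (n p : ℕ) (X : Fin n → Fin p → ℝ) (Y : Fin n → ℝ) (W : Fin n → Fin 2)
    (mu : Fin 2 → (Fin p → ℝ) → ℝ)
    (muhat : Fin 2 → Fin n → ℝ)  -- muhat w i = μ̂⁽ʷ'⁻ⁱ⁾(Xᵢ)
    (nw : Fin 2 → ℕ) (hnw : ∀ w, nw w = (univ.filter fun i => W i = w).card)
    (hpos : ∀ w, 1 ≤ nw w)
    (tauhat : ℝ)
    (htauhat : tauhat
      = (∑ i, (muhat 1 i - muhat 0 i)) / n
        + (∑ i ∈ univ.filter fun i => W i = 1, (Y i - muhat 1 i)) / nw 1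
        - (∑ i ∈ univ.filter fun i => W i = 0, (Y i - muhat 0 i)) / nw 0)
    (R : ℝ)
    (hR : R = ∑ i, ((-1 : ℝ) ^ (W i : ℕ) / nw (W i))
      * (((nw 0 : ℝ) / n) * (muhat 1 i - mu 1 (X i))
        + ((nw 1 : ℝ) / n) * (muhat 0 i - mu 0 (X i)))) :
    tauhat
      = (∑ i ∈ univ.filter fun i => W i = 1, (Y i - mu 1 (X i))) / nw 1
        - (∑ i ∈ univ.filter fun i => W i = 0, (Y i - mu 0 (X i))) / nw 0
        + (∑ i, (mu 1 (X i) - mu 0 (X i))) / n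
        + R := by
  have hW : ∀ i, W i = 0 ∨ W i = 1 := by
    intro i
    omega
  classical
  have hfilter : (univ.filter fun i => ¬ W i = 0) = (univ.filter fun i => W i = 1) := by
    apply Finset.filter_congr
    intro i _
    rcases hW i with h | h <;> simp [h]
  have hsplit : ∀ f : Fin n → ℝ, ∑ i, f i
      = (∑ i ∈ univ.filter fun i => W i = 0, f i) + ∑ i ∈ univ.filter fun i => W i = 1, f i := by
    intro f
    rw [← Finset.sum_filter_add_sum_filter_not univ (fun i => W i = 0) f, hfilter]
  have hn : (n : ℝ) = (nw 0 : ℝ) + (nw 1 : ℝ) := by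
    have : n = nw 0 + nw 1 := by
      rw [hnw 0, hnw 1, ← hfilter, Finset.card_filter_add_card_filter_not,
        Finset.card_univ, Fintype.card_fin]
    rw [this]; push_cast; ring
  have h0 : (nw 0 : ℝ) ≠ 0 := by
    have := hpos 0; positivity
  have h1 : (nw 1 : ℝ) ≠ 0 := by
    have := hpos 1; positivity
  have hnne : (n : ℝ) ≠ 0 := by rw [hn]; positivity
  have hR' : R = (∑ i ∈ univ.filter fun i => W i = 0,
        ((1 : ℝ) / nw 0) * (((nw 0 : ℝ) / n) * (muhat 1 i - mu 1 (X i))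
          + ((nw 1 : ℝ) / n) * (muhat 0 i - mu 0 (X i))))
      + (∑ i ∈ univ.filter fun i => W i = 1,
        (-(1 : ℝ) / nw 1) * (((nw 0 : ℝ) / n) * (muhat 1 i - mu 1 (X i))
          + ((nw 1 : ℝ) / n) * (muhat 0 i - mu 0 (X i)))) := by
    rw [hR, hsplit]
    congr 1
    · apply Finset.sum_congr rfl
      intro i hi
      simp only [Finset.mem_filter] at hi
      rw [hi.2]
      norm_num
    · apply Finset.sum_congr rfl
      intro i hi
      simp only [Finset.mem_filter] at hi
      rw [hi.2]
      norm_num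
  rw [htauhat, hR', hsplit (fun i => muhat 1 i - muhat 0 i), hsplit (fun i => mu 1 (X i) - mu 0 (X i))]
  simp only [Finset.sum_sub_distrib, ← Finset.mul_sum, Finset.sum_add_distrib]
  rw [hn]
  field_simp
  ring
end
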